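/- Let M be symmetric positive definite, L real square, β > 0, and suppose L is symmetric positive semidefinite. Then every generalized eigenvalue λ with ((1/β)M + L M⁻¹ L) x = λ (L + (1/√β)M) M⁻¹ (L + (1/√β)M) x for nonzero x satisfies λ = (a² + b²)/(a + b)² ∈ [1/2, 1] for some a, b ≥ 0 not both zero, where a, b arise from a simultaneous diagonalization; in particular 1/2 ≤ λ ≤ 1. -/

import Mathlib

open Matrix

theorem stmt11 {n : ℕ}
    (M L : Matrix (Fin n) (Fin n) ℝ) (hM : M.PosDef) (hL : L.PosSemidef)
    (β : ℝ) (hβ : 0 < β) :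
    ∀ (μ : ℝ) (x : Fin n → ℝ), x ≠ 0 →
      ((1 / β) • M + L * M⁻¹ * L) *ᵥ x =
        μ • (((L + (1 / Real.sqrt β) • M) * M⁻¹ * (L + (1 / Real.sqrt β) • M)) *ᵥ x) →
      (∃ a b : ℝ, 0 ≤ a ∧ 0 ≤ b ∧ (a ≠ 0 ∨ b ≠ 0) ∧ μ = (a ^ 2 + b ^ 2) / (a + b) ^ 2) ∧
        1 / 2 ≤ μ ∧ μ ≤ 1 := by
  intro μ x hx heq
  set c : ℝ := 1 / Real.sqrt β with hc_def
  have hsβ : 0 < Real.sqrt β := Real.sqrt_pos.mpr hβ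
  have hc : 0 < c := by positivity
  have hc2 : c * c = 1 / β := by
    rw [hc_def, div_mul_div_comm, one_mul, Real.mul_self_sqrt hβ.le]
  have hMdet : IsUnit M.det := isUnit_iff_ne_zero.mpr hM.det_pos.ne'
  have hmm1 : M * M⁻¹ = 1 := Matrix.mul_nonsing_inv M hMdet
  have hmm2 : M⁻¹ * M = 1 := Matrix.nonsing_inv_mul M hMdet
  have hLt : Lᵀ = L := by rw [← conjTranspose_eq_transpose_of_trivial]; exact hL.isHermitian.eq
  have hMt : Mᵀ = M := by rw [← conjTranspose_eq_transpose_of_trivial]; exact hM.isHermitian.eq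
  set A : Matrix (Fin n) (Fin n) ℝ := (1 / β) • M + L * M⁻¹ * L with hA_def
  set S : Matrix (Fin n) (Fin n) ℝ := L + c • M with hS_def
  set T : Matrix (Fin n) (Fin n) ℝ := c • M - L with hT_def
  -- key matrix identities
  have hB : S * M⁻¹ * S = A + (2 * c) • L := by
    simp only [hS_def, hA_def, add_mul, mul_add, Matrix.smul_mul, Matrix.mul_smul,
      Matrix.mul_assoc, Matrix.mul_nonsing_inv_cancel_left M _ hMdet,
      Matrix.nonsing_inv_mul_cancel_left M _ hMdet, hmm1, hmm2, Matrix.mul_one,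
      Matrix.one_mul, smul_smul, hc2]
    module
  have hD : T * M⁻¹ * T = A - (2 * c) • L := by
    simp only [hT_def, hA_def, sub_mul, mul_sub, Matrix.smul_mul, Matrix.mul_smul,
      Matrix.mul_assoc, Matrix.mul_nonsing_inv_cancel_left M _ hMdet,
      Matrix.nonsing_inv_mul_cancel_left M _ hMdet, hmm1, hmm2, Matrix.mul_one,
      Matrix.one_mul, smul_smul, hc2]
    module
  -- quadratic form values
  set r : ℝ := x ⬝ᵥ (L *ᵥ x) with hr_def
  set p : ℝ := x ⬝ᵥ (A *ᵥ x) with hp_def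
  set q : ℝ := x ⬝ᵥ ((S * M⁻¹ * S) *ᵥ x) with hq_def
  set d : ℝ := x ⬝ᵥ ((T * M⁻¹ * T) *ᵥ x) with hd_def
  have hr0 : 0 ≤ r := by simpa using hL.dotProduct_mulVec_nonneg x
  -- S is positive definite, T is Hermitian
  have hSpd : S.PosDef := by
    refine Matrix.PosDef.of_dotProduct_mulVec_pos ?_ (fun y hy => ?_)
    · show Sᴴ = S
      simp only [hS_def, conjTranspose_add, conjTranspose_smul, hL.isHermitian.eq,
        hM.isHermitian.eq, star_one, one_smul]
      simp
    · rw [hS_def, Matrix.add_mulVec, dotProduct_add, Matrix.smul_mulVec,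
        dotProduct_smul]
      have h1 := hL.dotProduct_mulVec_nonneg y
      have h2 := hM.dotProduct_mulVec_pos hy
      have : (0:ℝ) < c * (star y ⬝ᵥ (M *ᵥ y)) := mul_pos hc h2
      simpa [smul_eq_mul] using add_pos_of_nonneg_of_pos h1 this
  have hTherm : T.IsHermitian := by
    show Tᴴ = T
    simp only [hT_def, conjTranspose_sub, conjTranspose_smul, hL.isHermitian.eq,
      hM.isHermitian.eq]
    simp
  -- rewrite quadratic forms as M⁻¹ forms
  have key : ∀ (U : Matrix (Fin n) (Fin n) ℝ), U.IsHermitian →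
      x ⬝ᵥ ((U * M⁻¹ * U) *ᵥ x) = (U *ᵥ x) ⬝ᵥ (M⁻¹ *ᵥ (U *ᵥ x)) := by
    intro U hU
    rw [← Matrix.mulVec_mulVec, ← Matrix.mulVec_mulVec, Matrix.dotProduct_mulVec x U,
      ← Matrix.mulVec_transpose]
    have : Uᵀ = U := by rw [← conjTranspose_eq_transpose_of_trivial]; exact hU.eq
    rw [this]
  have hq0 : 0 < q := by
    rw [hq_def, key S hSpd.isHermitian]
    have hSx : S *ᵥ x ≠ 0 := by
      intro h
      have := hSpd.dotProduct_mulVec_pos hx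
      rw [h] at this
      simp at this
    simpa using hM.inv.dotProduct_mulVec_pos hSx
  have hd0 : 0 ≤ d := by
    rw [hd_def, key T hTherm]
    simpa using hM.inv.posSemidef.dotProduct_mulVec_nonneg (T *ᵥ x)
  -- scalar relations
  have hqpr : q = p + 2 * c * r := by
    rw [hq_def, hB, Matrix.add_mulVec, dotProduct_add, Matrix.smul_mulVec,
      dotProduct_smul, ← hp_def, ← hr_def]
    simp only [smul_eq_mul]
  have hdpr : d = p - 2 * c * r := by
    rw [hd_def, hD, Matrix.sub_mulVec, dotProduct_sub, Matrix.smul_mulVec,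
      dotProduct_smul, ← hp_def, ← hr_def]
    simp only [smul_eq_mul]
  have hpq : p = μ * q := by
    have := congrArg (fun v => x ⬝ᵥ v) heq
    simpa [hp_def, hq_def, dotProduct_smul] using this
  clear_value r p q d c
  clear heq key hTherm hSpd hB hD hq_def hd_def hp_def hr_def hA_def hS_def hT_def
  clear hLt hMt hmm1 hmm2 A S T hx hMdet hL hM M L x
  have hcr : 0 ≤ 2 * c * r := by positivity
  have hdq : d ≤ q := by linarith
  have hμ : μ = p / q := by field_simp at hpq ⊢; linarith
  have hμ1 : μ ≤ 1 := by
    rw [hμ, div_le_one hq0]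
    linarith
  have hμ2 : 1 / 2 ≤ μ := by
    rw [hμ, le_div_iff₀ hq0]
    linarith
  refine ⟨?_, hμ2, hμ1⟩
  set s : ℝ := Real.sqrt q with hs_def
  set t : ℝ := Real.sqrt d with ht_def
  have hs0 : 0 < s := Real.sqrt_pos.mpr hq0
  have ht0 : 0 ≤ t := Real.sqrt_nonneg d
  have hts : t ≤ s := Real.sqrt_le_sqrt hdq
  have hs2 : s ^ 2 = q := Real.sq_sqrt hq0.le
  have ht2 : t ^ 2 = d := Real.sq_sqrt hd0
  refine ⟨(s + t) / 2, (s - t) / 2, by positivity, by linarith, Or.inl (by positivity), ?_⟩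
  have h1' : ((s + t) / 2) ^ 2 + ((s - t) / 2) ^ 2 = (q + d) / 2 := by
    rw [← hs2, ← ht2]; ring
  have h2' : ((s + t) / 2 + (s - t) / 2) ^ 2 = q := by
    rw [← hs2]; ring
  rw [h1', h2', hμ]
  congr 1
  linarith
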